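/- Let (C, E, s) be an extriangulated category satisfying Condition (WIC), and let (Q, R̃) and (Q̃, R) be hereditary cotorsion pairs with R̃ ⊆ R, Q̃ ⊆ Q, Q̃ ∩ R = Q ∩ R̃. Let W = {X : there exists an E-triangle X → R → Q --> with R ∈ R̃, Q ∈ Q̃}. Then W is closed under extensions: for any E-triangle W → Y → W' --> with W, W' ∈ W, also Y ∈ W. -/

import Mathlib

open CategoryTheory Limits

universe w v u

/-- An extriangulated category structure on an additive category `𝒞`, in the sense of
Nakaoka–Palu: a biadditive `Ab`-valued functor `E` together with an additive realization,
encoded via the predicate `IsTriangle x y δ` meaning that `A ⟶x B ⟶y X` realizes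
`δ ∈ E(X,A)`, satisfying (ET1)–(ET4) and their duals. -/
structure ExtriangulatedStructure (𝒞 : Type u) [Category.{v} 𝒞] [Preadditive 𝒞]
    [HasBinaryBiproducts 𝒞] where
  E : 𝒞 → 𝒞 → AddCommGrpCat.{w}
  pull : ∀ {X' X A : 𝒞}, (X' ⟶ X) → E X A → E X' A
  push : ∀ {X A A' : 𝒞}, (A ⟶ A') → E X A → E X A'
  pull_id : ∀ {X A : 𝒞} (δ : E X A), pull (𝟙 X) δ = δ
  push_id : ∀ {X A : 𝒞} (δ : E X A), push (𝟙 A) δ = δ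
  pull_comp : ∀ {X'' X' X A : 𝒞} (c' : X'' ⟶ X') (c : X' ⟶ X) (δ : E X A),
      pull (c' ≫ c) δ = pull c' (pull c δ)
  push_comp : ∀ {X A A' A'' : 𝒞} (a : A ⟶ A') (a' : A' ⟶ A'') (δ : E X A),
      push (a ≫ a') δ = push a' (push a δ)
  pull_push : ∀ {X' X A A' : 𝒞} (c : X' ⟶ X) (a : A ⟶ A') (δ : E X A),
      pull c (push a δ) = push a (pull c δ)
  pull_add : ∀ {X' X A : 𝒞} (c : X' ⟶ X) (δ δ' : E X A),
      pull c (δ + δ') = pull c δ + pull c δ'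
  push_add : ∀ {X A A' : 𝒞} (a : A ⟶ A') (δ δ' : E X A),
      push a (δ + δ') = push a δ + push a δ'
  add_pull : ∀ {X' X A : 𝒞} (c c' : X' ⟶ X) (δ : E X A),
      pull (c + c') δ = pull c δ + pull c' δ
  add_push : ∀ {X A A' : 𝒞} (a a' : A ⟶ A') (δ : E X A),
      push (a + a') δ = push a δ + push a' δ
  IsTriangle : ∀ {A B X : 𝒞}, (A ⟶ B) → (B ⟶ X) → E X A → Prop
  realize_exists : ∀ {X A : 𝒞} (δ : E X A),
      ∃ (B : 𝒞) (x : A ⟶ B) (y : B ⟶ X), IsTriangle x y δ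
  realize_zero : ∀ (A X : 𝒞),
      IsTriangle (biprod.inl : A ⟶ A ⊞ X) (biprod.snd : A ⊞ X ⟶ X) (0 : E X A)
  realize_sum : ∀ {A B X A' B' X' : 𝒞} (x : A ⟶ B) (y : B ⟶ X) (δ : E X A)
      (x' : A' ⟶ B') (y' : B' ⟶ X') (δ' : E X' A'),
      IsTriangle x y δ → IsTriangle x' y' δ' →
      IsTriangle (biprod.map x x') (biprod.map y y')
        (push biprod.inl (pull biprod.fst δ) + push biprod.inr (pull biprod.snd δ'))
  realize_iso : ∀ {A B B' X : 𝒞} (x : A ⟶ B) (y : B ⟶ X) (δ : E X A) (b : B ≅ B'),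
      IsTriangle x y δ → IsTriangle (x ≫ b.hom) (b.inv ≫ y) δ
  realize_mor : ∀ {A B X A' B' X' : 𝒞} {x : A ⟶ B} {y : B ⟶ X} {δ : E X A}
      {x' : A' ⟶ B'} {y' : B' ⟶ X'} {δ' : E X' A'} (a : A ⟶ A') (c : X ⟶ X'),
      IsTriangle x y δ → IsTriangle x' y' δ' → push a δ = pull c δ' →
      ∃ b : B ⟶ B', x ≫ b = a ≫ x' ∧ y ≫ c = b ≫ y'
  ET3 : ∀ {A B X A' B' X' : 𝒞} {x : A ⟶ B} {y : B ⟶ X} {δ : E X A}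
      {x' : A' ⟶ B'} {y' : B' ⟶ X'} {δ' : E X' A'} (a : A ⟶ A') (b : B ⟶ B'),
      IsTriangle x y δ → IsTriangle x' y' δ' → x ≫ b = a ≫ x' →
      ∃ c : X ⟶ X', push a δ = pull c δ' ∧ y ≫ c = b ≫ y'
  ET3op : ∀ {A B X A' B' X' : 𝒞} {x : A ⟶ B} {y : B ⟶ X} {δ : E X A}
      {x' : A' ⟶ B'} {y' : B' ⟶ X'} {δ' : E X' A'} (b : B ⟶ B') (c : X ⟶ X'),
      IsTriangle x y δ → IsTriangle x' y' δ' → y ≫ c = b ≫ y' →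
      ∃ a : A ⟶ A', push a δ = pull c δ' ∧ x ≫ b = a ≫ x'
  ET4 : ∀ {A B D Cv F : 𝒞} (f : A ⟶ B) (f' : B ⟶ D) (δ : E D A)
      (g : B ⟶ Cv) (g' : Cv ⟶ F) (δ' : E F B),
      IsTriangle f f' δ → IsTriangle g g' δ' →
      ∃ (E₀ : 𝒞) (h : A ⟶ Cv) (h' : Cv ⟶ E₀) (d : D ⟶ E₀) (e : E₀ ⟶ F) (δ'' : E E₀ A),
        IsTriangle h h' δ'' ∧ IsTriangle d e (push f' δ') ∧
        h = f ≫ g ∧ f' ≫ d = g ≫ h' ∧ g' = h' ≫ e ∧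
        pull d δ'' = δ ∧ push f δ'' = pull e δ'
  ET4op : ∀ {D B A F Cv : 𝒞} (i : D ⟶ B) (p : B ⟶ A) (δ : E A D)
      (j : F ⟶ Cv) (q : Cv ⟶ B) (δ' : E B F),
      IsTriangle i p δ → IsTriangle j q δ' →
      ∃ (E₀ : 𝒞) (i' : E₀ ⟶ Cv) (p' : Cv ⟶ A) (m : F ⟶ E₀) (n : E₀ ⟶ D) (δ'' : E A E₀),
        IsTriangle i' p' δ'' ∧ IsTriangle m n (pull i δ') ∧
        p' = q ≫ p ∧ i' ≫ q = n ≫ i ∧ j = m ≫ i' ∧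
        push n δ'' = δ ∧ pull p δ'' = push m δ'

namespace ExtriangulatedStructure

variable {𝒞 : Type u} [Category.{v} 𝒞] [Preadditive 𝒞] [HasBinaryBiproducts 𝒞]
variable (S : ExtriangulatedStructure.{w} 𝒞)

/-- A morphism is an inflation if it occurs as the first map of some `E`-triangle. -/
def IsInflation {A B : 𝒞} (f : A ⟶ B) : Prop :=
  ∃ (X : 𝒞) (g : B ⟶ X) (δ : S.E X A), S.IsTriangle f g δ

/-- A morphism is a deflation if it occurs as the second map of some `E`-triangle. -/
def IsDeflation {B X : 𝒞} (g : B ⟶ X) : Prop :=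
  ∃ (A : 𝒞) (f : A ⟶ B) (δ : S.E X A), S.IsTriangle f g δ

/-- Condition (WIC). -/
def WIC : Prop :=
  (∀ {A B X : 𝒞} (f : A ⟶ B) (g : B ⟶ X), S.IsInflation (f ≫ g) → S.IsInflation f) ∧
  (∀ {A B X : 𝒞} (f : A ⟶ B) (g : B ⟶ X), S.IsDeflation (f ≫ g) → S.IsDeflation g)

/-- `(a, b, c)` is a morphism of `E`-triangles. -/
def IsTriangleMor {A B X A' B' X' : 𝒞} (x : A ⟶ B) (y : B ⟶ X) (δ : S.E X A)
    (x' : A' ⟶ B') (y' : B' ⟶ X') (δ' : S.E X' A')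
    (a : A ⟶ A') (b : B ⟶ B') (c : X ⟶ X') : Prop :=
  x ≫ b = a ≫ x' ∧ y ≫ c = b ≫ y' ∧ S.push a δ = S.pull c δ'

/-- A cotorsion pair `(𝒬, ℛ)`: `E(𝒬, ℛ) = 0` and every object admits the two
approximation `E`-triangles. -/
def CotorsionPair (𝒬 ℛ : Set 𝒞) : Prop :=
  (∀ (Q R : 𝒞), Q ∈ 𝒬 → R ∈ ℛ → ∀ δ : S.E Q R, δ = 0) ∧
  (∀ X : 𝒞, ∃ (R Q : 𝒞) (f : R ⟶ Q) (g : Q ⟶ X) (δ : S.E X R),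
      S.IsTriangle f g δ ∧ Q ∈ 𝒬 ∧ R ∈ ℛ) ∧
  (∀ X : 𝒞, ∃ (R Q : 𝒞) (f : X ⟶ R) (g : R ⟶ Q) (δ : S.E Q X),
      S.IsTriangle f g δ ∧ Q ∈ 𝒬 ∧ R ∈ ℛ)

/-- A cotorsion pair is hereditary if `𝒬` is closed under cocones of deflations and
`ℛ` is closed under cones of inflations. -/
def Hereditary (𝒬 ℛ : Set 𝒞) : Prop :=
  (∀ {A B X : 𝒞} (f : A ⟶ B) (g : B ⟶ X) (δ : S.E X A),
      S.IsTriangle f g δ → B ∈ 𝒬 → X ∈ 𝒬 → A ∈ 𝒬) ∧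
  (∀ {A B X : 𝒞} (f : A ⟶ B) (g : B ⟶ X) (δ : S.E X A),
      S.IsTriangle f g δ → A ∈ ℛ → B ∈ ℛ → X ∈ ℛ)

/-- A class of objects is thick: closed under direct summands and satisfying the
2-out-of-3 property on `E`-triangles. -/
def Thick (𝒲 : Set 𝒞) : Prop :=
  (∀ {X Y : 𝒞}, Y ∈ 𝒲 → (∃ (i : X ⟶ Y) (p : Y ⟶ X), i ≫ p = 𝟙 X) → X ∈ 𝒲) ∧
  (∀ {A B X : 𝒞} (f : A ⟶ B) (g : B ⟶ X) (δ : S.E X A), S.IsTriangle f g δ →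
    (A ∈ 𝒲 → B ∈ 𝒲 → X ∈ 𝒲) ∧ (A ∈ 𝒲 → X ∈ 𝒲 → B ∈ 𝒲) ∧ (B ∈ 𝒲 → X ∈ 𝒲 → A ∈ 𝒲))

/-- `(𝒬, 𝒲, ℛ)` is a Hovey triple. -/
def HoveyTriple (𝒬 𝒲 ℛ : Set 𝒞) : Prop :=
  S.Thick 𝒲 ∧ S.CotorsionPair 𝒬 (𝒲 ∩ ℛ) ∧ S.CotorsionPair (𝒬 ∩ 𝒲) ℛ

end ExtriangulatedStructure

namespace ExtriangulatedStructure

open CategoryTheory Limits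

variable {𝒞 : Type u} [Category.{v} 𝒞] [Preadditive 𝒞] [HasBinaryBiproducts 𝒞]
variable (S : ExtriangulatedStructure.{w} 𝒞)

section Helpers

lemma pull_zero {X' X A : 𝒞} (c : X' ⟶ X) : S.pull c (0 : S.E X A) = 0 := by
  have h := S.pull_add c (0 : S.E X A) 0
  rwa [add_zero, left_eq_add] at h

lemma push_zero {X A A' : 𝒞} (a : A ⟶ A') : S.push a (0 : S.E X A) = 0 := by
  have h := S.push_add a (0 : S.E X A) 0
  rwa [add_zero, left_eq_add] at h

lemma map_pull_zero {X' X A : 𝒞} (δ : S.E X A) : S.pull (0 : X' ⟶ X) δ = 0 := by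
  have h := S.add_pull (0 : X' ⟶ X) 0 δ
  rwa [add_zero, left_eq_add] at h

lemma map_push_zero {X A A' : 𝒞} (δ : S.E X A) : S.push (0 : A ⟶ A') δ = 0 := by
  have h := S.add_push (0 : A ⟶ A') 0 δ
  rwa [add_zero, left_eq_add] at h

lemma pull_neg_map {X' X A : 𝒞} (c : X' ⟶ X) (δ : S.E X A) :
    S.pull (-c) δ = - S.pull c δ := by
  have h := S.add_pull c (-c) δ
  rw [add_neg_cancel, S.map_pull_zero] at h
  exact (neg_eq_of_add_eq_zero_right h.symm).symm

lemma pull_sub_map {X' X A : 𝒞} (c c' : X' ⟶ X) (δ : S.E X A) :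
    S.pull (c - c') δ = S.pull c δ - S.pull c' δ := by
  rw [sub_eq_add_neg, S.add_pull, S.pull_neg_map, ← sub_eq_add_neg]

lemma push_neg {X A A' : 𝒞} (a : A ⟶ A') (δ : S.E X A) :
    S.push a (-δ) = - S.push a δ := by
  have h := S.push_add a δ (-δ)
  rw [add_neg_cancel, S.push_zero] at h
  exact (neg_eq_of_add_eq_zero_right h.symm).symm

lemma push_sub {X A A' : 𝒞} (a : A ⟶ A') (δ δ' : S.E X A) :
    S.push a (δ - δ') = S.push a δ - S.push a δ' := by
  rw [sub_eq_add_neg, S.push_add, S.push_neg, ← sub_eq_add_neg]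

/-- `x ≫ y = 0` and `push x δ = 0` for any triangle. -/
lemma push_first {A B X : 𝒞} {x : A ⟶ B} {y : B ⟶ X} {δ : S.E X A}
    (ht : S.IsTriangle x y δ) : S.push x δ = 0 ∧ x ≫ y = 0 := by
  obtain ⟨a, ha, hb⟩ := S.ET3op (biprod.lift (𝟙 B) y) (𝟙 X) ht (S.realize_zero B X)
    (by rw [Category.comp_id, biprod.lift_snd])
  -- hb : x ≫ biprod.lift (𝟙 B) y = a ≫ biprod.inl
  have hax : a = x := by
    have := congrArg (fun t => t ≫ (biprod.fst : B ⊞ X ⟶ B)) hb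
    simpa using this.symm
  constructor
  · rw [← hax, ha, S.pull_id]
  · have := congrArg (fun t => t ≫ (biprod.snd : B ⊞ X ⟶ X)) hb
    simpa [hax] using this

lemma comp_zero_of_triangle {A B X : 𝒞} {x : A ⟶ B} {y : B ⟶ X} {δ : S.E X A}
    (ht : S.IsTriangle x y δ) : x ≫ y = 0 := (S.push_first ht).2

lemma push_self_zero {A B X : 𝒞} {x : A ⟶ B} {y : B ⟶ X} {δ : S.E X A}
    (ht : S.IsTriangle x y δ) : S.push x δ = 0 := (S.push_first ht).1

end Helpers
end ExtriangulatedStructure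
namespace ExtriangulatedStructure

open CategoryTheory Limits

variable {𝒞 : Type u} [Category.{v} 𝒞] [Preadditive 𝒞] [HasBinaryBiproducts 𝒞]
variable (S : ExtriangulatedStructure.{w} 𝒞)

section ExactTools

/-- A triangle with zero class has a section of its deflation. -/
lemma section_of_zero {A B X : 𝒞} {d : A ⟶ B} {e : B ⟶ X}
    (ht : S.IsTriangle d e (0 : S.E X A)) : ∃ σ : X ⟶ B, σ ≫ e = 𝟙 X := by
  obtain ⟨b, hb1, hb2⟩ := S.realize_mor (𝟙 A) (𝟙 X) (S.realize_zero A X) ht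
    (by rw [S.push_id, S.pull_id])
  refine ⟨biprod.inr ≫ b, ?_⟩
  rw [Category.assoc, ← hb2]
  simp

/-- A triangle with zero class has a retraction of its inflation. -/
lemma retraction_of_zero {A B X : 𝒞} {d : A ⟶ B} {e : B ⟶ X}
    (ht : S.IsTriangle d e (0 : S.E X A)) : ∃ ρ : B ⟶ A, d ≫ ρ = 𝟙 A := by
  obtain ⟨b, hb1, hb2⟩ := S.realize_mor (𝟙 A) (𝟙 X) ht (S.realize_zero A X)
    (by rw [S.push_id, S.pull_id])
  refine ⟨b ≫ biprod.fst, ?_⟩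
  rw [← Category.assoc, hb1]
  simp

/-- E1: a map into `B` killed by `y` factors through `x`. -/
lemma factor_through_infl {A B X K : 𝒞} {x : A ⟶ B} {y : B ⟶ X} {δ : S.E X A}
    (ht : S.IsTriangle x y δ) (φ : K ⟶ B) (hφ : φ ≫ y = 0) :
    ∃ a : K ⟶ A, a ≫ x = φ := by
  obtain ⟨a, _, hb⟩ := S.ET3op (biprod.desc φ 0) (0 : K ⟶ X)
    (S.realize_zero K K) ht
    (by
      apply biprod.hom_ext' <;> simp [hφ])
  exact ⟨a, by simpa using hb.symm⟩

/-- E3: if `push x ε = 0` then `ε` is a pullback of `δ`. -/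
lemma eq_pull_of_push_zero {A B X K : 𝒞} {x : A ⟶ B} {y : B ⟶ X} {δ : S.E X A}
    (ht : S.IsTriangle x y δ) (ε : S.E K A) (hε : S.push x ε = 0) :
    ∃ c : K ⟶ X, ε = S.pull c δ := by
  obtain ⟨M, u, v, huv⟩ := S.realize_exists ε
  obtain ⟨b, hb1, hb2⟩ := S.realize_mor x (𝟙 K) huv (S.realize_zero B K)
    (by rw [S.pull_id, hε])
  have hw : u ≫ (b ≫ biprod.fst) = 𝟙 A ≫ x := by
    rw [← Category.assoc, hb1]; simp
  obtain ⟨c, hc1, _⟩ := S.ET3 (𝟙 A) (b ≫ biprod.fst) huv ht hw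
  exact ⟨c, by rwa [S.push_id] at hc1⟩

/-- E5: if `pull y ε = 0` then `ε` is a pushout of `δ`. -/
lemma eq_push_of_pull_zero {A B X K : 𝒞} {x : A ⟶ B} {y : B ⟶ X} {δ : S.E X A}
    (ht : S.IsTriangle x y δ) (ε : S.E X K) (hε : S.pull y ε = 0) :
    ∃ a : A ⟶ K, ε = S.push a δ := by
  obtain ⟨M, u, v, huv⟩ := S.realize_exists ε
  obtain ⟨b, hb1, hb2⟩ := S.realize_mor (𝟙 K) y (S.realize_zero K B) huv
    (by rw [S.push_id, hε])
  have hw : y ≫ 𝟙 X = (biprod.inr ≫ b) ≫ v := by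
    rw [Category.comp_id, Category.assoc, ← hb2]; simp
  obtain ⟨a, ha1, _⟩ := S.ET3op (biprod.inr ≫ b) (𝟙 X) ht huv hw
  exact ⟨a, by rwa [S.pull_id, eq_comm] at ha1⟩

/-- E4: if `push y η = 0` then `η` is in the image of `push x`. -/
lemma exists_push_of_push_zero {A B X K : 𝒞} {x : A ⟶ B} {y : B ⟶ X} {δ : S.E X A}
    (ht : S.IsTriangle x y δ) (η : S.E K B) (hη : S.push y η = 0) :
    ∃ ε : S.E K A, S.push x ε = η := by
  obtain ⟨N, u, v, huv⟩ := S.realize_exists η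
  obtain ⟨E₀, h, h', d, e, δ'', hT1, hT2, _, _, _, _, hpush⟩ :=
    S.ET4 x y δ u v η ht huv
  rw [hη] at hT2
  obtain ⟨σ, hσ⟩ := S.section_of_zero hT2
  refine ⟨S.pull σ δ'', ?_⟩
  rw [← S.pull_push, hpush, ← S.pull_comp, hσ, S.pull_id]

/-- E4op: if `pull x η = 0` then `η` is in the image of `pull y`. -/
lemma exists_pull_of_pull_zero {A B X K : 𝒞} {x : A ⟶ B} {y : B ⟶ X} {δ : S.E X A}
    (ht : S.IsTriangle x y δ) (η : S.E B K) (hη : S.pull x η = 0) :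
    ∃ ω : S.E X K, S.pull y ω = η := by
  obtain ⟨M, u, v, huv⟩ := S.realize_exists η
  obtain ⟨E₀, i', p', m, n, δ'', hT1, hT2, _, _, _, _, hpull⟩ :=
    S.ET4op x y δ u v η ht huv
  rw [hη] at hT2
  obtain ⟨ρ, hρ⟩ := S.retraction_of_zero hT2
  refine ⟨S.push ρ δ'', ?_⟩
  rw [S.pull_push, hpull, ← S.push_comp, hρ, S.push_id]

end ExactTools
end ExtriangulatedStructure
namespace ExtriangulatedStructure

open CategoryTheory Limits

variable {𝒞 : Type u} [Category.{v} 𝒞] [Preadditive 𝒞] [HasBinaryBiproducts 𝒞]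
variable (S : ExtriangulatedStructure.{w} 𝒞)

section IsoTools

/-- An endomorphism of the middle of a triangle compatible with both maps is invertible. -/
lemma isIso_endo {A B X : 𝒞} {x : A ⟶ B} {y : B ⟶ X} {δ : S.E X A}
    (ht : S.IsTriangle x y δ) (e : B ⟶ B) (he1 : x ≫ e = x) (he2 : e ≫ y = y) :
    IsIso e := by
  have hky : (𝟙 B - e) ≫ y = 0 := by rw [Preadditive.sub_comp, Category.id_comp, he2, sub_self]
  obtain ⟨a, ha⟩ := S.factor_through_infl ht (𝟙 B - e) hky
  have hxn : x ≫ (𝟙 B - e) = 0 := by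
    rw [Preadditive.comp_sub, Category.comp_id, he1, sub_self]
  have h2 : x ≫ (a ≫ x) = 0 := by rw [ha]; exact hxn
  have hnn : (𝟙 B - e) ≫ (𝟙 B - e) = 0 := by
    rw [← ha, Category.assoc, h2, comp_zero]
  have gen : ∀ n : B ⟶ B, n ≫ n = 0 →
      (𝟙 B - n) ≫ (𝟙 B + n) = 𝟙 B ∧ (𝟙 B + n) ≫ (𝟙 B - n) = 𝟙 B := by
    intro n hn
    constructor <;>
    · simp only [Preadditive.sub_comp, Preadditive.comp_add, Preadditive.add_comp,
        Preadditive.comp_sub, Category.id_comp, Category.comp_id, hn]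
      abel
  refine ⟨⟨𝟙 B + (𝟙 B - e), ?_, ?_⟩⟩
  · have := (gen (𝟙 B - e) hnn).1
    rwa [sub_sub_cancel] at this
  · have := (gen (𝟙 B - e) hnn).2
    rwa [sub_sub_cancel] at this

/-- A compatible morphism between middles admitting a compatible reverse is invertible. -/
lemma isIso_of_two {A B X A' B' X' : 𝒞} {x : A ⟶ B} {y : B ⟶ X} {δ : S.E X A}
    {x' : A' ⟶ B'} {y' : B' ⟶ X'} {δ' : S.E X' A'}
    (ht : S.IsTriangle x y δ) (ht' : S.IsTriangle x' y' δ')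
    (b : B ⟶ B') (b' : B' ⟶ B)
    (he1 : x ≫ (b ≫ b') = x) (he2 : (b ≫ b') ≫ y = y)
    (he1' : x' ≫ (b' ≫ b) = x') (he2' : (b' ≫ b) ≫ y' = y') : IsIso b := by
  have hE : IsIso (b ≫ b') := S.isIso_endo ht _ he1 he2
  have hE' : IsIso (b' ≫ b) := S.isIso_endo ht' _ he1' he2'
  have key : b ≫ b' ≫ inv (b ≫ b') = 𝟙 B := by
    rw [← Category.assoc, IsIso.hom_inv_id]
  have hrl : b' ≫ inv (b ≫ b') = inv (b' ≫ b) ≫ b' := by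
    calc b' ≫ inv (b ≫ b')
        = (inv (b' ≫ b) ≫ (b' ≫ b)) ≫ b' ≫ inv (b ≫ b') := by
          rw [IsIso.inv_hom_id, Category.id_comp]
      _ = inv (b' ≫ b) ≫ b' ≫ (b ≫ b' ≫ inv (b ≫ b')) := by
          simp only [Category.assoc]
      _ = inv (b' ≫ b) ≫ b' := by rw [key, Category.comp_id]
  refine ⟨⟨b' ≫ inv (b ≫ b'), key, ?_⟩⟩
  rw [hrl, Category.assoc, IsIso.inv_hom_id]

/-- Uniqueness of realizations: the comparison morphism between two realizations of the
same class is an isomorphism. -/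
lemma isIso_comparison {A B B' X : 𝒞} {x : A ⟶ B} {y : B ⟶ X} {x' : A ⟶ B'} {y' : B' ⟶ X}
    {δ : S.E X A} (ht : S.IsTriangle x y δ) (ht' : S.IsTriangle x' y' δ)
    (b : B ⟶ B') (hb1 : x ≫ b = x') (hb2 : b ≫ y' = y) : IsIso b := by
  obtain ⟨b', hb1', hb2'⟩ := S.realize_mor (𝟙 A) (𝟙 X) ht' ht (by rw [S.push_id, S.pull_id])
  rw [Category.id_comp] at hb1'
  rw [Category.comp_id] at hb2'
  exact S.isIso_of_two ht ht' b b'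
    (by rw [← Category.assoc, hb1, hb1'])
    (by rw [Category.assoc, ← hb2', hb2])
    (by rw [← Category.assoc, hb1', hb1])
    (by rw [Category.assoc, hb2, hb2'])

/-- Transport a triangle along an isomorphism of its first object. -/
lemma triangle_iso_first {A B X A' : 𝒞} {x : A ⟶ B} {y : B ⟶ X} {δ : S.E X A}
    (ht : S.IsTriangle x y δ) (α : A' ≅ A) :
    S.IsTriangle (α.hom ≫ x) y (S.push α.inv δ) := by
  obtain ⟨Bt, xt, yt, hts⟩ := S.realize_exists (S.push α.inv δ)
  obtain ⟨b, hb1, hb2⟩ := S.realize_mor α.hom (𝟙 X) hts ht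
    (by rw [← S.push_comp, α.inv_hom_id, S.push_id, S.pull_id])
  rw [Category.comp_id] at hb2
  obtain ⟨b', hb1', hb2'⟩ := S.realize_mor α.inv (𝟙 X) ht hts (by rw [S.pull_id])
  rw [Category.comp_id] at hb2'
  have hbiso : IsIso b := by
    refine S.isIso_of_two hts ht b b' ?_ ?_ ?_ ?_
    · rw [← Category.assoc, hb1, Category.assoc, hb1', ← Category.assoc,
        α.hom_inv_id, Category.id_comp]
    · rw [Category.assoc, ← hb2', ← hb2]
    · rw [← Category.assoc, hb1', Category.assoc, hb1, ← Category.assoc,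
        α.inv_hom_id, Category.id_comp]
    · rw [Category.assoc, ← hb2, ← hb2']
  have hres := S.realize_iso xt yt (S.push α.inv δ) (asIso b) hts
  rw [asIso_hom, hb1] at hres
  have hy : (asIso b).inv ≫ yt = y := by
    rw [asIso_inv, hb2, IsIso.inv_hom_id_assoc]
  rwa [hy] at hres

end IsoTools
end ExtriangulatedStructure
namespace ExtriangulatedStructure

open CategoryTheory Limits

variable {𝒞 : Type u} [Category.{v} 𝒞] [Preadditive 𝒞] [HasBinaryBiproducts 𝒞]
variable (S : ExtriangulatedStructure.{w} 𝒞)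

section GoodRealizations

/-- Any class between two objects of `Rt` admits a realization whose middle lies in `Rt`. -/
lemma good_realization_R (𝒬 Rt : Set 𝒞)
    (hvan : ∀ (Q R : 𝒞), Q ∈ 𝒬 → R ∈ Rt → ∀ δ : S.E Q R, δ = 0)
    (happrox : ∀ X : 𝒞, ∃ (R Q : 𝒞) (f : X ⟶ R) (g : R ⟶ Q) (δ : S.E Q X),
      S.IsTriangle f g δ ∧ Q ∈ 𝒬 ∧ R ∈ Rt)
    (hcone : ∀ {A B X : 𝒞} (f : A ⟶ B) (g : B ⟶ X) (δ : S.E X A),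
      S.IsTriangle f g δ → A ∈ Rt → B ∈ Rt → X ∈ Rt)
    {R0 R1 : 𝒞} (hR0 : R0 ∈ Rt) (hR1 : R1 ∈ Rt) (ω : S.E R1 R0) :
    ∃ (T : 𝒞) (mt : R0 ⟶ T) (nt : T ⟶ R1), S.IsTriangle mt nt ω ∧ T ∈ Rt := by
  obtain ⟨Z₀, r₁, r₂, hZ⟩ := S.realize_exists ω
  obtain ⟨Rb, Qb, az, bz, ηz, haz, hQb, hRb⟩ := happrox Z₀
  have h1 : S.push r₂ ηz = 0 := hvan Qb R1 hQb hR1 _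
  obtain ⟨ε', hε'⟩ := S.exists_push_of_push_zero hZ ηz h1
  have hε0 : ε' = 0 := hvan Qb R0 hQb hR0 ε'
  have hηz : ηz = 0 := by rw [← hε', hε0, S.push_zero]
  rw [hηz] at haz
  obtain ⟨V, h, kv, dv, ev, θv, hT1, hT2, _, _, _, hpull, _⟩ :=
    S.ET4 r₁ r₂ ω az bz 0 hZ haz
  rw [S.push_zero] at hT2
  have hV : V ∈ Rt := hcone _ _ _ hT1 hR0 hRb
  have hQbRt : Qb ∈ Rt := hcone _ _ _ hT2 hR1 hV
  obtain ⟨Es, is, ps, ms, ns, δs, hU1, hU2, _, _, _, hpushn, _⟩ :=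
    S.ET4op dv ev 0 h kv θv hT2 hT1
  rw [hpull] at hU2
  obtain ⟨εs, hεs⟩ := S.exists_push_of_push_zero hU2 δs hpushn
  have hεs0 : εs = 0 := hvan Qb R0 hQb hR0 εs
  have hδs : δs = 0 := by rw [← hεs, hεs0, S.push_zero]
  rw [hδs] at hU1
  obtain ⟨b, hb1, hb2⟩ := S.realize_mor (𝟙 Es) (𝟙 Qb) (S.realize_zero Es Qb) hU1
    (by rw [S.push_id, S.pull_id])
  rw [Category.id_comp] at hb1
  rw [Category.comp_id] at hb2
  have hbiso : IsIso b := S.isIso_comparison (S.realize_zero Es Qb) hU1 b hb1 hb2.symm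
  have htr := S.realize_iso biprod.inl biprod.snd (0 : S.E Es Qb)
    ((biprod.braiding Qb Es) ≪≫ asIso b) (S.realize_zero Qb Es)
  exact ⟨Es, ms, ns, hU2, hcone _ _ _ htr hQbRt hRb⟩

/-- Any class between two objects of `Qt` admits a realization whose middle lies in `Qt`,
together with a witnessing triangle embedding it between two `Qt`-objects. -/
lemma good_realization_Q (Qt ℛ : Set 𝒞)
    (hvan : ∀ (Q R : 𝒞), Q ∈ Qt → R ∈ ℛ → ∀ δ : S.E Q R, δ = 0)
    (happrox : ∀ X : 𝒞, ∃ (R Q : 𝒞) (f : R ⟶ Q) (g : Q ⟶ X) (δ : S.E X R),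
      S.IsTriangle f g δ ∧ Q ∈ Qt ∧ R ∈ ℛ)
    (hcocone : ∀ {A B X : 𝒞} (f : A ⟶ B) (g : B ⟶ X) (δ : S.E X A),
      S.IsTriangle f g δ → B ∈ Qt → X ∈ Qt → A ∈ Qt)
    {Q0 Q1 : 𝒞} (hQ0 : Q0 ∈ Qt) (hQ1 : Q1 ∈ Qt) (χ : S.E Q1 Q0) :
    ∃ (E' : 𝒞) (d : Q0 ⟶ E') (e : E' ⟶ Q1), S.IsTriangle d e χ ∧ E' ∈ Qt ∧
      ∃ (V₁ V₂ : 𝒞) (w₁ : E' ⟶ V₁) (w₂ : V₁ ⟶ V₂) (ϖ : S.E V₂ E'),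
        S.IsTriangle w₁ w₂ ϖ ∧ V₁ ∈ Qt ∧ V₂ ∈ Qt := by
  obtain ⟨Z₀, q₁, q₂, hZ⟩ := S.realize_exists χ
  obtain ⟨Rz, Qz, sz, tz, ζz, hsz, hQz, hRz⟩ := happrox Z₀
  have h1 : S.pull q₁ ζz = 0 := hvan Q0 Rz hQ0 hRz _
  obtain ⟨ω₀, hω₀⟩ := S.exists_pull_of_pull_zero hZ ζz h1
  have hω00 : ω₀ = 0 := hvan Q1 Rz hQ1 hRz ω₀
  have hζz : ζz = 0 := by rw [← hω₀, hω00, S.pull_zero]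
  rw [hζz] at hsz
  obtain ⟨E₀, i₀, p₀, m₀, n₀, δ₀, hA1, hA2, _, _, _, hpushn, _⟩ :=
    S.ET4op q₁ q₂ χ sz tz 0 hZ hsz
  rw [S.pull_zero] at hA2
  have hE₀ : E₀ ∈ Qt := hcocone _ _ _ hA1 hQz hQ1
  have hRzQt : Rz ∈ Qt := hcocone _ _ _ hA2 hE₀ hQ0
  obtain ⟨Es, h₂, hs, ds, es, θs, hB1, hB2, _, _, _, hpulld, _⟩ :=
    S.ET4 m₀ n₀ 0 i₀ p₀ δ₀ hA2 hA1
  rw [hpushn] at hB2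
  obtain ⟨ωs, hωs⟩ := S.exists_pull_of_pull_zero hB2 θs hpulld
  have hωs0 : ωs = 0 := hvan Q1 Rz hQ1 hRz ωs
  have hθs : θs = 0 := by rw [← hωs, hωs0, S.pull_zero]
  rw [hθs] at hB1
  obtain ⟨b, hb1, hb2⟩ := S.realize_mor (𝟙 Rz) (𝟙 Es) (S.realize_zero Rz Es) hB1
    (by rw [S.push_id, S.pull_id])
  rw [Category.id_comp] at hb1
  rw [Category.comp_id] at hb2
  have hbiso : IsIso b := S.isIso_comparison (S.realize_zero Rz Es) hB1 b hb1 hb2.symm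
  have htr := S.realize_iso biprod.inl biprod.snd (0 : S.E Rz Es)
    ((biprod.braiding Es Rz) ≪≫ asIso b) (S.realize_zero Es Rz)
  have hEs : Es ∈ Qt := hcocone _ _ _ htr hQz hRzQt
  exact ⟨Es, ds, es, hB2, hEs, Qz, Rz, _, _, 0, htr, hQz, hRzQt⟩

end GoodRealizations
end ExtriangulatedStructure
open CategoryTheory Limits in
/-- the class `W` is closed under extensions. -/
theorem stmt7 {𝒞 : Type u} [Category.{v} 𝒞] [Preadditive 𝒞] [HasBinaryBiproducts 𝒞]
    (S : ExtriangulatedStructure.{w} 𝒞) (hWIC : S.WIC)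
    (𝒬 ℛ Qt Rt : Set 𝒞)
    (hcp1 : S.CotorsionPair 𝒬 Rt) (hh1 : S.Hereditary 𝒬 Rt)
    (hcp2 : S.CotorsionPair Qt ℛ) (hh2 : S.Hereditary Qt ℛ)
    (hRR : Rt ⊆ ℛ) (hQQ : Qt ⊆ 𝒬) (hmeet : Qt ∩ ℛ = 𝒬 ∩ Rt)
    (W : Set 𝒞)
    (hW : W = {X : 𝒞 | ∃ (R Q : 𝒞) (f : X ⟶ R) (g : R ⟶ Q) (δ : S.E Q X),
        S.IsTriangle f g δ ∧ R ∈ Rt ∧ Q ∈ Qt})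
    {W0 Y W1 : 𝒞} (f : W0 ⟶ Y) (g : Y ⟶ W1) (δ : S.E W1 W0)
    (hT : S.IsTriangle f g δ) (h0 : W0 ∈ W) (h1 : W1 ∈ W) :
    Y ∈ W := by
  rw [hW] at h0 h1 ⊢
  obtain ⟨R0, Q0, f0, g0, δ0, ht0, hR0, hQ0⟩ := h0
  obtain ⟨R1, Q1, f1, g1, δ1, ht1, hR1, hQ1⟩ := h1
  obtain ⟨hvan1, happ12, happ13⟩ := hcp1
  obtain ⟨hvan2, happ22, happ23⟩ := hcp2
  obtain ⟨hQco, hRtcone⟩ := hh1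
  obtain ⟨hQtco, hRcone⟩ := hh2
  -- Stage A: a `Qt`-cover of `W1` born as a kernel, and the lift `ω` of `ε` along `f1`.
  obtain ⟨R', Q', s', t', ζ', hts', hQ', hR'⟩ := happ22 R1
  obtain ⟨K, iK, pK, mK, nK, δK, hK1, hK2, _, _, _, _, _⟩ :=
    S.ET4op f1 g1 δ1 s' t' ζ' ht1 hts'
  have hKQt : K ∈ Qt := hQtco _ _ _ hK1 hQ' hQ1
  set ε := S.push f0 δ with hε
  have hpull0 : S.pull nK ε = 0 := hvan1 K R0 (hQQ hKQt) hR0 _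
  obtain ⟨a, ha⟩ := S.eq_push_of_pull_zero hK2 ε hpull0
  set ω := S.push a ζ' with hω
  have hωpull : S.pull f1 ω = ε := by
    rw [hω, S.pull_push]; exact ha.symm
  -- T ∈ Rt realizing ω
  obtain ⟨T, mt, nt, htT, hTRt⟩ :=
    S.good_realization_R 𝒬 Rt hvan1 happ13 hRtcone hR0 hR1 ω
  -- P with both triangles (R0 → P → W1, ε) and (P → T → Q1, δP)
  obtain ⟨P, i', p', m, n, δP, hP1, hP2, _, _, _, _, _⟩ :=
    S.ET4op f1 g1 δ1 mt nt ω ht1 htT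
  rw [hωpull] at hP2
  -- Pullback construction: the triangle (Y → P → Q0)
  obtain ⟨Z, h3, k, dz, ez, θ, hZ1, hZ2, _, _, _, hpulldz, hpushf0⟩ :=
    S.ET4 f0 g0 δ0 m n ε ht0 hP2
  have hg0ε : S.push g0 ε = 0 := by
    rw [hε, ← S.push_comp, S.comp_zero_of_triangle ht0, S.map_push_zero]
  rw [hg0ε] at hZ2
  obtain ⟨σ, hσ⟩ := S.section_of_zero hZ2
  have hpushθ' : S.push f0 (S.pull σ θ - δ) = 0 := by
    rw [S.push_sub, ← S.pull_push, hpushf0, ← S.pull_comp, hσ, S.pull_id, ← hε, sub_self]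
  obtain ⟨c, hc⟩ := S.eq_pull_of_push_zero ht0 _ hpushθ'
  set τ := σ - c ≫ dz with hτ
  have hτθ : S.pull τ θ = δ := by
    rw [hτ, S.pull_sub_map, S.pull_comp, hpulldz, ← hc]
    exact sub_sub_cancel _ _
  have hτez : τ ≫ ez = 𝟙 W1 := by
    rw [hτ, Preadditive.sub_comp, hσ, Category.assoc, S.comp_zero_of_triangle hZ2,
      comp_zero, sub_zero]
  have hΦez : biprod.desc dz τ ≫ ez = biprod.snd := by
    apply biprod.hom_ext' <;>
      simp [S.comp_zero_of_triangle hZ2, hτez]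
  have hΦiso : IsIso (biprod.desc dz τ) :=
    S.isIso_comparison (S.realize_zero Q0 W1) hZ2 _ (by simp) hΦez
  have htτ := S.realize_iso biprod.inl biprod.snd (0 : S.E Q0 W1)
      ((biprod.braiding W1 Q0) ≪≫ asIso (biprod.desc dz τ)) (S.realize_zero W1 Q0)
  have hbr : (biprod.inl : W1 ⟶ W1 ⊞ Q0) ≫ (biprod.braiding W1 Q0).hom = biprod.inr := by
    apply biprod.hom_ext <;> simp [biprod.braiding]
  have hfirst : biprod.inl ≫ ((biprod.braiding W1 Q0) ≪≫ asIso (biprod.desc dz τ)).hom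
      = τ := by
    rw [Iso.trans_hom, asIso_hom, ← Category.assoc, hbr]
    simp
  rw [hfirst] at htτ
  obtain ⟨Y', i'', p'', m'', n'', δ'', hY1, hY2, _, _, _, _, _⟩ :=
    S.ET4op τ _ 0 h3 k θ htτ hZ1
  rw [hτθ] at hY2
  obtain ⟨bY, hbY1, hbY2⟩ := S.realize_mor (𝟙 W0) (𝟙 W1) hT hY2
    (by rw [S.push_id, S.pull_id])
  rw [Category.id_comp] at hbY1
  rw [Category.comp_id] at hbY2
  have hbYiso : IsIso bY := S.isIso_comparison hT hY2 bY hbY1 hbY2.symm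
  have hwY := S.triangle_iso_first hY1 (asIso bY)
  rw [asIso_hom, asIso_inv] at hwY
  -- Final composition: Y → P → T
  obtain ⟨Zf, hcmp, kf, df, ef, θf, hF1, hF2, _, _, _, _, _⟩ :=
    S.ET4 (bY ≫ i'') p'' (S.push (inv bY) δ'') i' p' δP hwY hP1
  -- The cone lies in Qt
  obtain ⟨Es, ds, es, hGood, hEsQt, V₁, V₂, w₁, w₂, ϖ, hwt, hV₁, hV₂⟩ :=
    S.good_realization_Q Qt ℛ hvan2 happ22 hQtco hQ0 hQ1 (S.push p'' δP)
  obtain ⟨ι, hι1, hι2⟩ := S.realize_mor (𝟙 Q0) (𝟙 Q1) hF2 hGood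
    (by rw [S.push_id, S.pull_id])
  rw [Category.id_comp] at hι1
  rw [Category.comp_id] at hι2
  have hιiso : IsIso ι := S.isIso_comparison hF2 hGood ι hι1 hι2.symm
  have hwt' := S.triangle_iso_first hwt (asIso ι)
  have hZfQt : Zf ∈ Qt := hQtco _ _ _ hwt' hV₁ hV₂
  exact ⟨T, Zf, hcmp, kf, θf, hF1, hTRt, hZfQt⟩
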